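/- Assume v ≠ 0, and let s* ∈ {0,1,...,K} be the unique index such that S_λ̄(|U_(s*+1)|) ≤ M‖b_{s*}‖₂ < S_λ̄(|U_(s*)|). Then for every s ∈ {0,1,...,K}: if s < s*, the function f is strictly increasing on the interval [S_λ̄(|U_(s+1)|), S_λ̄(|U_(s)|)) (intersected with [0,∞)), and if s > s*, f is strictly decreasing on that interval. -/

import Mathlib

/-- Soft-thresholding operator `S_t(x) = sign(x) · max(|x| − t, 0)`. -/
noncomputable def st (t x : ℝ) : ℝ := Real.sign x * max (|x| - t) 0

/-- Euclidean (ℓ₂) norm on `ℝ^n`. -/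
noncomputable def l2 {n : ℕ} (x : Fin n → ℝ) : ℝ := Real.sqrt (∑ i, (x i) ^ 2)

/-- ℓ₁ norm on `ℝ^n`. -/
noncomputable def l1 {n : ℕ} (x : Fin n → ℝ) : ℝ := ∑ i, |x i|

/-- `du U σ s = |U_(s)|`, the `s`-th largest absolute entry of `U` (1-based, via a sorting
permutation `σ`), with the out-of-range convention `|U_(s)| = 0` for `s > K`
(so that `S_λ̄(|U_(K+1)|) = 0`). -/
noncomputable def du {K : ℕ} (U : Fin K → ℝ) (σ : Equiv.Perm (Fin K)) (s : ℕ) : ℝ :=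
  if h : s - 1 < K then |U (σ ⟨s - 1, h⟩)| else 0

/-- `a_s = λ − M·Σ_{i=1}^s (|U_(i)| − λ̄)`. -/
noncomputable def aseq {K : ℕ} (U : Fin K → ℝ) (σ : Equiv.Perm (Fin K))
    (lam lamb M : ℝ) (s : ℕ) : ℝ :=
  lam - M * ∑ i ∈ Finset.Icc 1 s, (du U σ i - lamb)

/-- `b_s = (1/(1+sM²)) · max{1 − a_s/‖v‖₂, 0} · v`. -/
noncomputable def bvec {k K : ℕ} (U : Fin K → ℝ) (σ : Equiv.Perm (Fin K))
    (lam lamb M : ℝ) (v : Fin k → ℝ) (s : ℕ) : Fin k → ℝ :=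
  fun i => (1 / (1 + (s : ℝ) * M ^ 2)) * max (1 - aseq U σ lam lamb M s / l2 v) 0 * v i

/-- `W(b)_j = sign(U_j)·min{M‖b‖₂, S_λ̄(|U_j|)}`. -/
noncomputable def Wmap {k K : ℕ} (lamb M : ℝ) (U : Fin K → ℝ) (b : Fin k → ℝ) :
    Fin K → ℝ :=
  fun j => Real.sign (U j) * min (M * l2 b) (st lamb (abs (U j)))

/-- `F(b) = ½‖v − b‖₂² + ½‖U − W(b)‖₂² + λ‖b‖₂ + λ̄‖W(b)‖₁`. -/
noncomputable def Ffun {k K : ℕ} (lam lamb M : ℝ) (v : Fin k → ℝ) (U : Fin K → ℝ)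
    (b : Fin k → ℝ) : ℝ :=
  (1 / 2) * ∑ i, (v i - b i) ^ 2
    + (1 / 2) * ∑ j, (U j - Wmap lamb M U b j) ^ 2
    + lam * l2 b + lamb * l1 (Wmap lamb M U b)

/-- `f(w) = min{ F(b) : b ∈ ℝ^k, M‖b‖₂ = w }` (as an infimum). -/
noncomputable def fmin {k K : ℕ} (lam lamb M : ℝ) (v : Fin k → ℝ) (U : Fin K → ℝ)
    (w : ℝ) : ℝ :=
  sInf (Ffun lam lamb M v U '' {b : Fin k → ℝ | M * l2 b = w})

-- helpers
lemma st_eq_max {t x : ℝ} (ht : 0 ≤ t) (hx : 0 ≤ x) : st t x = max (x - t) 0 := by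
  rcases eq_or_lt_of_le hx with h | h
  · have hm : max (0 - t) 0 = 0 := max_eq_right (by linarith)
    rw [← h, hm, st]
    simp [Real.sign_zero]
  · rw [st, Real.sign_of_pos h, abs_of_pos h, one_mul]

lemma st_nonneg' {t x : ℝ} (ht : 0 ≤ t) (hx : 0 ≤ x) : 0 ≤ st t x := by
  rw [st_eq_max ht hx]; exact le_max_right _ _

lemma st_mono' {t x y : ℝ} (ht : 0 ≤ t) (hx : 0 ≤ x) (hxy : x ≤ y) :
    st t x ≤ st t y := by
  rw [st_eq_max ht hx, st_eq_max ht (le_trans hx hxy)]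
  exact max_le_max (by linarith) le_rfl

lemma st_pos_eq {t x : ℝ} (ht : 0 ≤ t) (hx : 0 ≤ x) (h : 0 < st t x) :
    x - t = st t x := by
  rw [st_eq_max ht hx] at *
  rcases max_cases (x - t) 0 with ⟨h1, _⟩ | ⟨h1, _⟩
  · rw [h1]
  · rw [h1] at h; exact absurd h (lt_irrefl 0)

lemma l2_nonneg {n : ℕ} (x : Fin n → ℝ) : 0 ≤ l2 x := Real.sqrt_nonneg _

lemma l2_sq {n : ℕ} (x : Fin n → ℝ) : l2 x ^ 2 = ∑ i, x i ^ 2 :=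
  Real.sq_sqrt (by positivity)

lemma l2_smul {n : ℕ} (c : ℝ) (x : Fin n → ℝ) : l2 (fun i => c * x i) = |c| * l2 x := by
  unfold l2
  rw [show (∑ i, (c * x i)^2) = c^2 * ∑ i, x i ^2 by
      rw [Finset.mul_sum]; exact Finset.sum_congr rfl (fun i _ => by ring),
    Real.sqrt_mul (sq_nonneg c), Real.sqrt_sq_eq_abs]

lemma l2_pos {n : ℕ} (x : Fin n → ℝ) (hx : x ≠ 0) : 0 < l2 x := by
  have h : 0 < ∑ i, x i ^ 2 := by
    obtain ⟨i, hi⟩ : ∃ i, x i ≠ 0 := by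
      by_contra h; push_neg at h; exact hx (funext h)
    exact Finset.sum_pos' (fun j _ => sq_nonneg _) ⟨i, Finset.mem_univ i, by positivity⟩
  exact Real.sqrt_pos.mpr h

lemma sum_le_l2 {n : ℕ} (x y : Fin n → ℝ) : ∑ i, x i * y i ≤ l2 x * l2 y := by
  have h := Finset.sum_mul_sq_le_sq_mul_sq Finset.univ x y
  calc ∑ i, x i * y i ≤ |∑ i, x i * y i| := le_abs_self _
    _ = Real.sqrt ((∑ i, x i * y i)^2) := (Real.sqrt_sq_eq_abs _).symm
    _ ≤ Real.sqrt ((∑ i, x i ^2) * ∑ i, y i ^2) := Real.sqrt_le_sqrt h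
    _ = l2 x * l2 y := by
        rw [Real.sqrt_mul (by positivity)]; rfl

lemma du_nonneg {K : ℕ} (U : Fin K → ℝ) (σ : Equiv.Perm (Fin K)) (t : ℕ) :
    0 ≤ du U σ t := by
  unfold du; split
  · exact abs_nonneg _
  · exact le_rfl

lemma du_anti {K : ℕ} (U : Fin K → ℝ) (σ : Equiv.Perm (Fin K))
    (hsort : ∀ i j : Fin K, i ≤ j → |U (σ j)| ≤ |U (σ i)|)
    {t t' : ℕ} (h1 : 1 ≤ t) (h2 : t ≤ t') : du U σ t' ≤ du U σ t := by
  by_cases h : t' - 1 < K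
  · have h0 : t - 1 < K := lt_of_le_of_lt (by omega) h
    rw [du, dif_pos h, du, dif_pos h0]
    exact hsort ⟨t-1,h0⟩ ⟨t'-1,h⟩ (by simp only [Fin.mk_le_mk]; omega)
  · rw [du, dif_neg h]; exact du_nonneg U σ t

lemma aseq_succ {K : ℕ} (U : Fin K → ℝ) (σ : Equiv.Perm (Fin K))
    (lam lamb M : ℝ) (s : ℕ) :
    aseq U σ lam lamb M (s+1) = aseq U σ lam lamb M s - M * (du U σ (s+1) - lamb) := by
  unfold aseq
  rw [Finset.sum_Icc_succ_top (Nat.le_add_left 1 s)]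
  ring

lemma aseq_sum {K : ℕ} (U : Fin K → ℝ) (σ : Equiv.Perm (Fin K))
    (lam lamb M : ℝ) (s : ℕ) :
    aseq U σ lam lamb M s
      = lam - M * ((∑ i ∈ Finset.range s, du U σ (i+1)) - s * lamb) := by
  induction s with
  | zero => simp [aseq]
  | succ n ih =>
    rw [aseq_succ, ih, Finset.sum_range_succ]
    push_cast; ring

/-- explicit formula for `F` on the sphere of radius `w/M`. -/
noncomputable def Efun {k K : ℕ} (lam lamb M : ℝ) (v : Fin k → ℝ) (U : Fin K → ℝ)
    (w : ℝ) : ℝ :=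
  (1/2) * (∑ i, (v i)^2) - l2 v * (w/M) + (1/2)*(w/M)^2 + lam*(w/M)
    + ∑ j, ((1/2)*(|U j| - min w (st lamb |U j|))^2 + lamb * min w (st lamb |U j|))

lemma W_coord {k K : ℕ} (lamb M : ℝ) (hlamb : 0 ≤ lamb) (U : Fin K → ℝ)
    (b : Fin k → ℝ) (hw : 0 ≤ M * l2 b) (j : Fin K) :
    (U j - Wmap lamb M U b j)^2 = (|U j| - min (M*l2 b) (st lamb |U j|))^2 ∧
      |Wmap lamb M U b j| = min (M*l2 b) (st lamb |U j|) := by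
  have hT : 0 ≤ st lamb |U j| := st_nonneg' hlamb (abs_nonneg _)
  show (U j - Real.sign (U j) * min (M * l2 b) (st lamb |U j|))^2 = _ ∧
    |Real.sign (U j) * min (M * l2 b) (st lamb |U j|)| = _
  set T := st lamb |U j| with hTdef
  set mm := min (M * l2 b) T with hmmdef
  have hm : 0 ≤ mm := le_min hw hT
  rcases lt_trichotomy (U j) 0 with h|h|h
  · rw [Real.sign_of_neg h, abs_of_neg h]
    exact ⟨by ring, by rw [neg_one_mul, abs_neg, abs_of_nonneg hm]⟩
  · have h0 : T = 0 := by
      rw [hTdef, h, abs_zero, st_eq_max hlamb le_rfl]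
      exact max_eq_right (by linarith)
    have hmm0 : mm = 0 := by rw [hmmdef, h0]; exact min_eq_right hw
    rw [h, hmm0, Real.sign_zero, abs_zero]
    norm_num
  · rw [Real.sign_of_pos h, abs_of_pos h]
    exact ⟨by ring, by rw [one_mul, abs_of_nonneg hm]⟩

lemma Ffun_eq {k K : ℕ} (lam lamb M : ℝ) (hlamb : 0 ≤ lamb) (v : Fin k → ℝ)
    (U : Fin K → ℝ) (b : Fin k → ℝ) (hw : 0 ≤ M * l2 b) :
    Ffun lam lamb M v U b
      = (1/2) * (∑ i, (v i - b i)^2) + lam * l2 b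
        + ∑ j, ((1/2)*(|U j| - min (M*l2 b) (st lamb |U j|))^2
            + lamb * min (M*l2 b) (st lamb |U j|)) := by
  have hsum : ∑ j, ((1/2)*(|U j| - min (M*l2 b) (st lamb |U j|))^2
            + lamb * min (M*l2 b) (st lamb |U j|))
      = (1/2) * (∑ j, (U j - Wmap lamb M U b j)^2)
        + lamb * (∑ j, |Wmap lamb M U b j|) := by
    rw [Finset.mul_sum, Finset.mul_sum, ← Finset.sum_add_distrib]
    exact Finset.sum_congr rfl fun j _ => by
      rw [(W_coord lamb M hlamb U b hw j).1, (W_coord lamb M hlamb U b hw j).2]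
  rw [Ffun, l1, hsum]
  ring

lemma fmin_eq {k K : ℕ} (lam lamb M : ℝ) (hlamb : 0 ≤ lamb) (hM : 0 < M)
    (v : Fin k → ℝ) (hv : v ≠ 0) (U : Fin K → ℝ) (w : ℝ) (hw : 0 ≤ w) :
    fmin lam lamb M v U w = Efun lam lamb M v U w := by
  have hnv : 0 < l2 v := l2_pos v hv
  set nv := l2 v with hnvdef
  set c : ℝ := w / (M * nv) with hc
  have hc0 : 0 ≤ c := by positivity
  set b₀ : Fin k → ℝ := fun i => c * v i with hb₀def
  have hl2b₀ : l2 b₀ = c * nv := by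
    rw [hb₀def, l2_smul, abs_of_nonneg hc0]
  have hb₀ : M * l2 b₀ = w := by
    rw [hl2b₀, hc]; field_simp
  have hcnv : c * nv = w / M := by rw [hc]; field_simp
  have hvsum : (∑ i, (v i) ^2) = nv^2 := (l2_sq v).symm
  have key : ∀ b : Fin k → ℝ, M * l2 b = w → Ffun lam lamb M v U b
      = (1/2) * (∑ i, (v i - b i)^2) + lam * (w/M)
        + ∑ j, ((1/2)*(|U j| - min w (st lamb |U j|))^2
            + lamb * min w (st lamb |U j|)) := by
    intro b hb
    have hl2 : l2 b = w / M := by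
      rw [eq_div_iff hM.ne']; linear_combination hb
    rw [Ffun_eq lam lamb M hlamb v U b (hb ▸ hw), hb, hl2]
  apply IsLeast.csInf_eq
  constructor
  · refine ⟨b₀, hb₀, ?_⟩
    rw [key b₀ hb₀, Efun]
    have h1 : (∑ i, (v i - b₀ i)^2) = (1-c)^2 * nv^2 := by
      rw [← hvsum, Finset.mul_sum]
      exact Finset.sum_congr rfl fun i _ => by simp only [hb₀def]; ring
    rw [h1]
    have : (1/2:ℝ)*((1-c)^2*nv^2) = (1/2)*nv^2 - nv*(w/M) + (1/2)*(w/M)^2 := by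
      rw [← hcnv]; ring
    rw [hvsum]; linarith
  · rintro x ⟨b, hb, rfl⟩
    have hbe : M * l2 b = w := hb
    rw [key b hbe, Efun, hvsum]
    have hl2 : l2 b = w / M := by
      rw [eq_div_iff hM.ne']; linear_combination hbe
    have hcs : ∑ i, v i * b i ≤ nv * (w/M) := by
      have := sum_le_l2 v b
      rw [hl2] at this; exact this
    have hbsq : (∑ i, (b i)^2) = (w/M)^2 := by rw [← l2_sq, hl2]
    have hexp : (∑ i, (v i - b i)^2)
        = (∑ i, (v i)^2) - 2*(∑ i, v i * b i) + (∑ i, (b i)^2) := by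
      rw [Finset.mul_sum, ← Finset.sum_sub_distrib, ← Finset.sum_add_distrib]
      exact Finset.sum_congr rfl fun i _ => by ring
    rw [hexp, hvsum, hbsq]
    linarith

lemma Ediff {k K : ℕ} (lam lamb M : ℝ) (hlamb : 0 ≤ lamb) (hM : 0 < M)
    (v : Fin k → ℝ) (U : Fin K → ℝ) (σ : Equiv.Perm (Fin K))
    (hsort : ∀ i j : Fin K, i ≤ j → |U (σ j)| ≤ |U (σ i)|)
    (s : ℕ) (hsK : s ≤ K) (w w' : ℝ)
    (hlow : st lamb (du U σ (s+1)) ≤ w) (hww : w ≤ w')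
    (hup : 0 < s → w' < st lamb (du U σ s)) :
    Efun lam lamb M v U w' - Efun lam lamb M v U w
      = ((w' - w) / (2*M^2))
          * ((w+w') * (1 + (s:ℝ)*M^2) + 2*M*(aseq U σ lam lamb M s - l2 v)) := by
  classical
  set φ : ℝ → Fin K → ℝ := fun w0 j =>
    (1/2)*(|U j| - min w0 (st lamb |U j|))^2 + lamb * min w0 (st lamb |U j|) with hφdef
  set ψ : ℝ → ℕ → ℝ := fun w0 n => if h : n < K then φ w0 (σ ⟨n, h⟩) else 0 with hψdef
  have hreidx : ∀ w0 : ℝ, (∑ j, φ w0 j)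
      = (∑ i ∈ Finset.range s, ψ w0 i) + ∑ i ∈ Finset.Ico s K, ψ w0 i := by
    intro w0
    calc ∑ j, φ w0 j = ∑ i : Fin K, φ w0 (σ i) := (Equiv.sum_comp σ (φ w0)).symm
      _ = ∑ i : Fin K, ψ w0 (i : ℕ) := Finset.sum_congr rfl fun i _ => by simp [hψdef]
      _ = ∑ i ∈ Finset.range K, ψ w0 i := Fin.sum_univ_eq_sum_range (ψ w0) K
      _ = (∑ i ∈ Finset.range s, ψ w0 i) + ∑ i ∈ Finset.Ico s K, ψ w0 i := by
          rw [Finset.range_eq_Ico, Finset.range_eq_Ico]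
          exact (Finset.sum_Ico_consecutive (ψ w0) (Nat.zero_le s) hsK).symm
  have hIcoEq : (∑ i ∈ Finset.Ico s K, ψ w' i) = ∑ i ∈ Finset.Ico s K, ψ w i := by
    refine Finset.sum_congr rfl fun i hi => ?_
    obtain ⟨hsi, hiK⟩ := Finset.mem_Ico.mp hi
    have hsK' : s < K := lt_of_le_of_lt hsi hiK
    have hdusucc : du U σ (s+1) = |U (σ ⟨s, hsK'⟩)| := by
      simp only [du, Nat.add_sub_cancel, dif_pos hsK']
    have h1 : |U (σ ⟨i, hiK⟩)| ≤ du U σ (s+1) := by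
      rw [hdusucc]
      exact hsort ⟨s,hsK'⟩ ⟨i,hiK⟩ (by simp only [Fin.mk_le_mk]; omega)
    have hTle : st lamb |U (σ ⟨i, hiK⟩)| ≤ w :=
      le_trans (st_mono' hlamb (abs_nonneg _) h1) hlow
    simp only [hψdef, hφdef, dif_pos hiK]
    rw [min_eq_right hTle, min_eq_right (le_trans hTle hww)]
  set A : ℕ → ℝ := fun n => du U σ (n+1) with hAdef
  have hrsEq : (∑ i ∈ Finset.range s, ψ w' i) - ∑ i ∈ Finset.range s, ψ w i
      = (w' - w) * ((s:ℝ) * ((w+w')/2 + lamb) - ∑ i ∈ Finset.range s, A i) := by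
    rw [← Finset.sum_sub_distrib]
    rw [Finset.sum_congr rfl (fun i hi => ?_ :
      ∀ i ∈ Finset.range s, ψ w' i - ψ w i = (w'-w) * ((w+w')/2 + lamb - A i))]
    · rw [← Finset.mul_sum, Finset.sum_sub_distrib, Finset.sum_const, Finset.card_range,
        nsmul_eq_mul]
    · have his : i < s := Finset.mem_range.mp hi
      have hiK : i < K := lt_of_lt_of_le his hsK
      have hs0 : 0 < s := Nat.pos_of_ne_zero (by omega)
      have hs1K : s - 1 < K := by omega
      have hdus : du U σ s = |U (σ ⟨s-1, hs1K⟩)| := by rw [du, dif_pos]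
      have h1 : du U σ s ≤ |U (σ ⟨i, hiK⟩)| := by
        rw [hdus]
        exact hsort ⟨i,hiK⟩ ⟨s-1,hs1K⟩ (by simp only [Fin.mk_le_mk]; omega)
      have hw'T : w' < st lamb |U (σ ⟨i, hiK⟩)| :=
        lt_of_lt_of_le (hup hs0) (st_mono' hlamb (du_nonneg U σ s) h1)
      have hA : A i = |U (σ ⟨i, hiK⟩)| := by
        simp only [hAdef, du, Nat.add_sub_cancel, dif_pos hiK]
      simp only [hψdef, hφdef, dif_pos hiK]
      rw [min_eq_left (le_of_lt hw'T), min_eq_left (le_of_lt (lt_of_le_of_lt hww hw'T)), ← hA]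
      ring
  have haseq : aseq U σ lam lamb M s
      = lam - M * ((∑ i ∈ Finset.range s, A i) - s * lamb) := by
    rw [aseq_sum U σ lam lamb M s]
  have hEfun : ∀ w0 : ℝ, Efun lam lamb M v U w0
      = (1/2) * (∑ i, (v i)^2) - l2 v * (w0/M) + (1/2)*(w0/M)^2 + lam*(w0/M)
        + ∑ j, φ w0 j := fun w0 => rfl
  rw [hEfun w, hEfun w', hreidx w, hreidx w', hIcoEq, haseq]
  have hM0 : (M:ℝ) ≠ 0 := hM.ne'
  field_simp
  linear_combination (2*M^2) * hrsEq

noncomputable def gq {k K : ℕ} (lam lamb M : ℝ) (v : Fin k → ℝ) (U : Fin K → ℝ)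
    (σ : Equiv.Perm (Fin K)) (s : ℕ) (m : ℝ) : ℝ :=
  m * (1 + (s:ℝ)*M^2) + 2*M*(aseq U σ lam lamb M s - l2 v)

lemma gq_rec {k K : ℕ} (lam lamb M : ℝ) (v : Fin k → ℝ) (U : Fin K → ℝ)
    (σ : Equiv.Perm (Fin K)) (s : ℕ) (m : ℝ) :
    gq lam lamb M v U σ (s+1) m
      = gq lam lamb M v U σ s m + M^2*(m - 2*(du U σ (s+1) - lamb)) := by
  unfold gq; rw [aseq_succ]; push_cast; ring

lemma gq_sub {k K : ℕ} (lam lamb M : ℝ) (v : Fin k → ℝ) (U : Fin K → ℝ)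
    (σ : Equiv.Perm (Fin K)) (s : ℕ) (m m' : ℝ) :
    gq lam lamb M v U σ s m' - gq lam lamb M v U σ s m = (m'-m)*(1+(s:ℝ)*M^2) := by
  unfold gq; ring

lemma one_add_pos (M : ℝ) (hM : 0 < M) (s : ℕ) : 0 < 1 + (s:ℝ)*M^2 := by positivity

-- T is antitone (for arguments ≥ 1)
lemma T_anti {K : ℕ} (lamb : ℝ) (hlamb : 0 ≤ lamb) (U : Fin K → ℝ)
    (σ : Equiv.Perm (Fin K))
    (hsort : ∀ i j : Fin K, i ≤ j → |U (σ j)| ≤ |U (σ i)|)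
    {t t' : ℕ} (h1 : 1 ≤ t) (h2 : t ≤ t') :
    st lamb (du U σ t') ≤ st lamb (du U σ t) :=
  st_mono' hlamb (du_nonneg U σ t') (du_anti U σ hsort h1 h2)

lemma beta_val {k K : ℕ} (lam lamb M : ℝ) (hM : 0 < M) (v : Fin k → ℝ) (hv : v ≠ 0)
    (U : Fin K → ℝ) (σ : Equiv.Perm (Fin K)) (s : ℕ) :
    M * l2 (bvec U σ lam lamb M v s)
      = M * max (l2 v - aseq U σ lam lamb M s) 0 / (1 + (s:ℝ)*M^2) := by
  have hnv : 0 < l2 v := l2_pos v hv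
  have hpos : (0:ℝ) < 1 + (s:ℝ)*M^2 := one_add_pos M hM s
  have hC : 0 ≤ (1 / (1 + (s:ℝ) * M ^ 2)) * max (1 - aseq U σ lam lamb M s / l2 v) 0 :=
    mul_nonneg (by positivity) (le_max_right _ _)
  rw [show bvec U σ lam lamb M v s
      = fun i => ((1 / (1 + (s:ℝ) * M ^ 2)) * max (1 - aseq U σ lam lamb M s / l2 v) 0) * v i
      from rfl]
  rw [l2_smul, abs_of_nonneg hC]
  have hmax : max (1 - aseq U σ lam lamb M s / l2 v) 0 * l2 v
      = max (l2 v - aseq U σ lam lamb M s) 0 := by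
    rw [max_mul_of_nonneg _ _ (le_of_lt hnv), zero_mul]
    congr 1
    field_simp
  rw [mul_assoc (1 / (1 + (s:ℝ) * M ^ 2)), hmax]
  field_simp

lemma gq_beta1 {k K : ℕ} (lam lamb M : ℝ) (hM : 0 < M) (v : Fin k → ℝ) (hv : v ≠ 0)
    (U : Fin K → ℝ) (σ : Equiv.Perm (Fin K)) (s : ℕ) :
    0 ≤ gq lam lamb M v U σ s (2 * (M * l2 (bvec U σ lam lamb M v s))) := by
  have hpos : (0:ℝ) < 1 + (s:ℝ)*M^2 := one_add_pos M hM s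
  rw [beta_val lam lamb M hM v hv U σ s]
  rcases le_total (aseq U σ lam lamb M s) (l2 v) with h | h
  · rw [max_eq_left (by linarith)]
    unfold gq
    have hcancel : 2*(M*(l2 v - aseq U σ lam lamb M s)/(1+(s:ℝ)*M^2))*(1+(s:ℝ)*M^2)
        = 2*M*(l2 v - aseq U σ lam lamb M s) := by field_simp
    rw [hcancel]; nlinarith [hM]
  · rw [max_eq_right (by linarith)]
    unfold gq
    have : 2 * (M * 0 / (1 + (s:ℝ)*M^2)) = 0 := by simp
    rw [this]
    unfold gq at *
    nlinarith [hM]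

lemma gq_beta2 {k K : ℕ} (lam lamb M : ℝ) (hM : 0 < M) (v : Fin k → ℝ) (hv : v ≠ 0)
    (U : Fin K → ℝ) (σ : Equiv.Perm (Fin K)) (s : ℕ)
    (hb : 0 < M * l2 (bvec U σ lam lamb M v s)) :
    gq lam lamb M v U σ s (2 * (M * l2 (bvec U σ lam lamb M v s))) = 0 := by
  have hpos : (0:ℝ) < 1 + (s:ℝ)*M^2 := one_add_pos M hM s
  rw [beta_val lam lamb M hM v hv U σ s] at *
  rcases le_total (l2 v - aseq U σ lam lamb M s) 0 with h | h
  · rw [max_eq_right h] at hb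
    exact absurd hb (by simp)
  · rw [max_eq_left h] at *
    unfold gq
    have hcancel : 2*(M*(l2 v - aseq U σ lam lamb M s)/(1+(s:ℝ)*M^2))*(1+(s:ℝ)*M^2)
        = 2*M*(l2 v - aseq U σ lam lamb M s) := by field_simp
    rw [hcancel]; ring

lemma upA {k K : ℕ} (lam lamb M : ℝ) (hlamb : 0 ≤ lamb) (hM : 0 < M)
    (v : Fin k → ℝ) (hv : v ≠ 0) (U : Fin K → ℝ) (σ : Equiv.Perm (Fin K))
    (hsort : ∀ i j : Fin K, i ≤ j → |U (σ j)| ≤ |U (σ i)|) (sstar : ℕ)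
    (hc2 : 0 < sstar → M * l2 (bvec U σ lam lamb M v sstar) < st lamb (du U σ sstar)) :
    ∀ t, t < sstar → 0 ≤ gq lam lamb M v U σ t (2 * st lamb (du U σ (t+1))) := by
  set β := M * l2 (bvec U σ lam lamb M v sstar) with hβdef
  have hβ0 : 0 ≤ β := mul_nonneg hM.le (l2_nonneg _)
  have key : ∀ n t, sstar = t + n → t < sstar →
      0 ≤ gq lam lamb M v U σ t (2 * st lamb (du U σ (t+1))) := by
    intro n
    induction n with
    | zero => intro t h1 h2; omega
    | succ n ih =>
      intro t h1 h2
      have ht1 : t + 1 ≤ sstar := by omega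
      have hs0 : 0 < sstar := by omega
      have hTs : 0 < st lamb (du U σ sstar) := lt_of_le_of_lt hβ0 (hc2 hs0)
      have hTpos : 0 < st lamb (du U σ (t+1)) :=
        lt_of_lt_of_le hTs (T_anti lamb hlamb U σ hsort (by omega) ht1)
      have hd : du U σ (t+1) - lamb = st lamb (du U σ (t+1)) :=
        st_pos_eq hlamb (du_nonneg U σ (t+1)) hTpos
      have hrec : gq lam lamb M v U σ t (2 * st lamb (du U σ (t+1)))
          = gq lam lamb M v U σ (t+1) (2 * st lamb (du U σ (t+1))) := by
        rw [gq_rec, hd]; ring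
      rw [hrec]
      rcases Nat.lt_or_ge (t+1) sstar with h | h
      · have ihh := ih (t+1) (by omega) h
        have hTm : st lamb (du U σ (t+2)) ≤ st lamb (du U σ (t+1)) :=
          T_anti lamb hlamb U σ hsort (by omega) (by omega)
        have hsub := gq_sub lam lamb M v U σ (t+1)
          (2 * st lamb (du U σ (t+2))) (2 * st lamb (du U σ (t+1)))
        have hfac : 0 < 1 + ((t:ℝ)+1)*M^2 := by positivity
        push_cast at hsub
        nlinarith [hsub, ihh, hTm, hfac]
      · have hts : t + 1 = sstar := by omega
        rw [hts]
        have hβ1 := gq_beta1 lam lamb M hM v hv U σ sstar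
        have hβlt : β < st lamb (du U σ sstar) := hc2 hs0
        have hsub := gq_sub lam lamb M v U σ sstar (2*β) (2 * st lamb (du U σ sstar))
        have hfac : 0 < 1 + (sstar:ℝ)*M^2 := one_add_pos M hM sstar
        rw [← hβdef] at hβ1
        nlinarith [hsub, hβ1, hβlt, hfac]
  intro t ht
  exact key (sstar - t) t (by omega) ht

lemma downB {k K : ℕ} (lam lamb M : ℝ) (hlamb : 0 ≤ lamb) (hM : 0 < M)
    (v : Fin k → ℝ) (hv : v ≠ 0) (U : Fin K → ℝ) (σ : Equiv.Perm (Fin K))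
    (hsort : ∀ i j : Fin K, i ≤ j → |U (σ j)| ≤ |U (σ i)|) (sstar : ℕ)
    (hc1 : st lamb (du U σ (sstar+1)) ≤ M * l2 (bvec U σ lam lamb M v sstar)) :
    ∀ t, sstar < t → 0 < st lamb (du U σ t) →
      gq lam lamb M v U σ t (2 * st lamb (du U σ t)) ≤ 0 := by
  set β := M * l2 (bvec U σ lam lamb M v sstar) with hβdef
  have key : ∀ t, sstar + 1 ≤ t → (0 < st lamb (du U σ t) →
      gq lam lamb M v U σ t (2 * st lamb (du U σ t)) ≤ 0) := by
    refine Nat.le_induction ?_ ?_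
    · intro hTpos
      have hβpos : 0 < β := lt_of_lt_of_le hTpos hc1
      have hgβ := gq_beta2 lam lamb M hM v hv U σ sstar hβpos
      rw [← hβdef] at hgβ
      have hd : du U σ (sstar+1) - lamb = st lamb (du U σ (sstar+1)) :=
        st_pos_eq hlamb (du_nonneg U σ (sstar+1)) hTpos
      have hrec : gq lam lamb M v U σ (sstar+1) (2 * st lamb (du U σ (sstar+1)))
          = gq lam lamb M v U σ sstar (2 * st lamb (du U σ (sstar+1))) := by
        rw [gq_rec, hd]; ring
      rw [hrec]
      have hsub := gq_sub lam lamb M v U σ sstar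
        (2 * st lamb (du U σ (sstar+1))) (2*β)
      have hfac : 0 < 1 + (sstar:ℝ)*M^2 := one_add_pos M hM sstar
      nlinarith [hsub, hgβ, hc1, hfac]
    · intro t ht ih hTpos
      have hTt : st lamb (du U σ (t+1)) ≤ st lamb (du U σ t) :=
        T_anti lamb hlamb U σ hsort (by omega) (by omega)
      have hTtpos : 0 < st lamb (du U σ t) := lt_of_lt_of_le hTpos hTt
      have hiht := ih hTtpos
      have hd : du U σ (t+1) - lamb = st lamb (du U σ (t+1)) :=
        st_pos_eq hlamb (du_nonneg U σ (t+1)) hTpos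
      have hrec : gq lam lamb M v U σ (t+1) (2 * st lamb (du U σ (t+1)))
          = gq lam lamb M v U σ t (2 * st lamb (du U σ (t+1))) := by
        rw [gq_rec, hd]; ring
      rw [hrec]
      have hsub := gq_sub lam lamb M v U σ t
        (2 * st lamb (du U σ (t+1))) (2 * st lamb (du U σ t))
      have hfac : 0 < 1 + (t:ℝ)*M^2 := one_add_pos M hM t
      nlinarith [hsub, hiht, hTt, hfac]
  intro t ht
  exact key t (by omega)

/-- Assume `v ≠ 0` and let `s*` be the unique index in `{0,…,K}` with
`S_λ̄(|U_(s*+1)|) ≤ M‖b_{s*}‖₂ < S_λ̄(|U_(s*)|)`. Then for every `s ∈ {0,…,K}`: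
if `s < s*`, `f` is strictly increasing on `[S_λ̄(|U_(s+1)|), S_λ̄(|U_(s)|)) ∩ [0,∞)`
(the upper bound being `+∞` when `s = 0`), and if `s > s*`, `f` is strictly decreasing
on that set. -/
theorem stmt13 (k K : ℕ) (hk : 1 ≤ k) (hK : 1 ≤ K)
    (lam lamb M : ℝ) (hlam : 0 ≤ lam) (hlamb : 0 ≤ lamb) (hM : 0 < M)
    (v : Fin k → ℝ) (hv : v ≠ 0) (U : Fin K → ℝ)
    (σ : Equiv.Perm (Fin K))
    (hsort : ∀ i j : Fin K, i ≤ j → |U (σ j)| ≤ |U (σ i)|)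
    (sstar : ℕ) (hss : sstar ≤ K)
    (hcond : st lamb (du U σ (sstar + 1)) ≤ M * l2 (bvec U σ lam lamb M v sstar) ∧
      (0 < sstar → M * l2 (bvec U σ lam lamb M v sstar) < st lamb (du U σ sstar)))
    (huniq : ∀ s : ℕ, s ≤ K →
      (st lamb (du U σ (s + 1)) ≤ M * l2 (bvec U σ lam lamb M v s) ∧
        (0 < s → M * l2 (bvec U σ lam lamb M v s) < st lamb (du U σ s))) →
      s = sstar) :
    ∀ s : ℕ, s ≤ K →
      (s < sstar →
        ∀ w w' : ℝ,
          (st lamb (du U σ (s + 1)) ≤ w ∧ (0 < s → w < st lamb (du U σ s)) ∧ 0 ≤ w) →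
          (st lamb (du U σ (s + 1)) ≤ w' ∧ (0 < s → w' < st lamb (du U σ s)) ∧ 0 ≤ w') →
          w < w' → fmin lam lamb M v U w < fmin lam lamb M v U w') ∧
      (sstar < s →
        ∀ w w' : ℝ,
          (st lamb (du U σ (s + 1)) ≤ w ∧ (0 < s → w < st lamb (du U σ s)) ∧ 0 ≤ w) →
          (st lamb (du U σ (s + 1)) ≤ w' ∧ (0 < s → w' < st lamb (du U σ s)) ∧ 0 ≤ w') →
          w < w' → fmin lam lamb M v U w' < fmin lam lamb M v U w) := by
  intro s hsK
  constructor
  · intro hlt w w' hw hw' hww'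
    have hE := Ediff lam lamb M hlamb hM v U σ hsort s hsK w w' hw.1 hww'.le hw'.2.1
    have hgq : (w+w') * (1 + (s:ℝ)*M^2) + 2*M*(aseq U σ lam lamb M s - l2 v)
        = gq lam lamb M v U σ s (w+w') := rfl
    rw [hgq] at hE
    have hA := upA lam lamb M hlamb hM v hv U σ hsort sstar hcond.2 s hlt
    have hsub := gq_sub lam lamb M v U σ s (2 * st lamb (du U σ (s+1))) (w+w')
    have hfac : 0 < 1 + (s:ℝ)*M^2 := one_add_pos M hM s
    have hmgt : 2 * st lamb (du U σ (s+1)) < w + w' := by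
      have := hw.1; linarith
    have hgpos : 0 < gq lam lamb M v U σ s (w+w') := by nlinarith [hsub, hA, hmgt, hfac]
    rw [fmin_eq lam lamb M hlamb hM v hv U w hw.2.2,
      fmin_eq lam lamb M hlamb hM v hv U w' hw'.2.2]
    have hcoef : 0 < (w' - w) / (2*M^2) := div_pos (by linarith) (by positivity)
    nlinarith [hE, mul_pos hcoef hgpos]
  · intro hgt w w' hw hw' hww'
    have hE := Ediff lam lamb M hlamb hM v U σ hsort s hsK w w' hw.1 hww'.le hw'.2.1
    have hgq : (w+w') * (1 + (s:ℝ)*M^2) + 2*M*(aseq U σ lam lamb M s - l2 v)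
        = gq lam lamb M v U σ s (w+w') := rfl
    rw [hgq] at hE
    have hs0 : 0 < s := by omega
    have hTs : w' < st lamb (du U σ s) := hw'.2.1 hs0
    have hTpos : 0 < st lamb (du U σ s) := lt_of_le_of_lt hw'.2.2 hTs
    have hB := downB lam lamb M hlamb hM v hv U σ hsort sstar hcond.1 s hgt hTpos
    have hsub := gq_sub lam lamb M v U σ s (w+w') (2 * st lamb (du U σ s))
    have hfac : 0 < 1 + (s:ℝ)*M^2 := one_add_pos M hM s
    have hmlt : w + w' < 2 * st lamb (du U σ s) := by linarith
    have hgneg : gq lam lamb M v U σ s (w+w') < 0 := by nlinarith [hsub, hB, hmlt, hfac]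
    rw [fmin_eq lam lamb M hlamb hM v hv U w hw.2.2,
      fmin_eq lam lamb M hlamb hM v hv U w' hw'.2.2]
    have hcoef : 0 < (w' - w) / (2*M^2) := div_pos (by linarith) (by positivity)
    nlinarith [hE, mul_pos hcoef (neg_pos.mpr hgneg)]
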